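/- There exists an unsatisfiable linear k-CNF formula with fewer than ln(2)·k^4·4^k clauses, for all sufficiently large k. -/

import Mathlib

-- Bernoulli-type: 2 * M^M ≤ (M+1)^M for M ≥ 1
lemma aux_two_mul_pow (M : ℕ) (hM : 1 ≤ M) : 2 * M ^ M ≤ (M + 1) ^ M := by
  have hM0 : (0:ℝ) < (M:ℝ) := by exact_mod_cast hM
  have hneg : (-2:ℝ) ≤ 1 / (M:ℝ) := by
    have h0 : (0:ℝ) ≤ 1 / (M:ℝ) := by positivity
    linarith
  have h := one_add_mul_le_pow hneg M
  have h2 : (2:ℝ) ≤ (1 + 1/M)^M := by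
    have : (M:ℝ) * (1/M) = 1 := by field_simp
    calc (2:ℝ) = 1 + (M:ℝ) * (1/M) := by rw [this]; norm_num
    _ ≤ (1 + 1/M)^M := h
  have key : (2:ℝ) * (M:ℝ)^M ≤ ((M:ℝ)+1)^M := by
    have he : ((M:ℝ)+1)^M = (1+1/M)^M * (M:ℝ)^M := by
      rw [← mul_pow]; congr 1; field_simp
    rw [he]
    nlinarith [pow_pos hM0 M]
  exact_mod_cast key

lemma aux_count (k q M : ℕ) (hk : 1 ≤ k) (hM : M + 1 = 2 ^ k) (hq : k * (M + 1) + 1 ≤ q) :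
    2 ^ (k * q) * M ^ (q ^ 2) < (M + 1) ^ (q ^ 2) := by
  have hM1 : 1 ≤ M := by
    have h2 : 2 ≤ 2 ^ k := (Nat.one_lt_two_pow_iff.mpr (by omega))
    omega
  have hMq : M + 1 ≤ q := by
    have : M + 1 ≤ k * (M + 1) := Nat.le_mul_of_pos_left _ (by omega)
    omega
  have hle : M * (k * q + 1) ≤ q ^ 2 := by nlinarith
  have h1 : 2 * M ^ M ≤ (M + 1) ^ M := aux_two_mul_pow M hM1
  have h2 : (2 * M ^ M) ^ (k * q + 1) ≤ ((M + 1) ^ M) ^ (k * q + 1) :=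
    Nat.pow_le_pow_left h1 _
  rw [mul_pow, ← pow_mul, ← pow_mul] at h2
  calc 2 ^ (k * q) * M ^ (q ^ 2)
      < 2 ^ (k * q + 1) * M ^ (q ^ 2) := by
        have hp : (0:ℕ) < M ^ (q^2) := Nat.pow_pos hM1
        have h3 : 2 ^ (k*q) < 2 ^ (k*q+1) := Nat.pow_lt_pow_right (by norm_num) (by omega)
        exact Nat.mul_lt_mul_of_lt_of_le h3 le_rfl hp
    _ = 2 ^ (k * q + 1) * M ^ (M * (k*q+1)) * M ^ (q^2 - M*(k*q+1)) := by
        rw [mul_assoc, ← pow_add]; congr 2; omega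
    _ ≤ (M + 1) ^ (M * (k*q+1)) * M ^ (q^2 - M*(k*q+1)) :=
        Nat.mul_le_mul_right _ h2
    _ ≤ (M + 1) ^ (M * (k*q+1)) * (M+1) ^ (q^2 - M*(k*q+1)) :=
        Nat.mul_le_mul_left _ (Nat.pow_le_pow_left (by omega) _)
    _ = (M + 1) ^ (q ^ 2) := by rw [← pow_add]; congr 1; omega

lemma aux_exists_good {ι A : Type*} [Fintype ι] [DecidableEq ι] [Fintype A] {k : ℕ}
    (f : A → ι → (Fin k → Bool))
    (h : Fintype.card A * (2 ^ k - 1) ^ (Fintype.card ι) < (2 ^ k) ^ (Fintype.card ι)) :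
    ∃ σ : ι → Fin k → Bool, ∀ a : A, ∃ p : ι, σ p = f a p := by
  by_contra hc
  push_neg at hc
  have hsub : (Finset.univ : Finset (ι → Fin k → Bool)) ⊆
      Finset.univ.biUnion
        (fun a : A => Fintype.piFinset (fun p => Finset.univ.erase (f a p))) := by
    intro σ _
    obtain ⟨a, ha⟩ := hc σ
    exact Finset.mem_biUnion.2 ⟨a, Finset.mem_univ _,
      Fintype.mem_piFinset.2 fun p => Finset.mem_erase.2 ⟨ha p, Finset.mem_univ _⟩⟩
  have hcard := (Finset.card_le_card hsub).trans Finset.card_biUnion_le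
  rw [Finset.card_univ, Fintype.card_fun] at hcard
  have hpi : ∀ a : A, (Fintype.piFinset (fun p : ι => Finset.univ.erase (f a p))).card
      = (2 ^ k - 1) ^ (Fintype.card ι) := by
    intro a
    rw [Fintype.card_piFinset]
    have he : ∀ p : ι, (Finset.univ.erase (f a p)).card = 2 ^ k - 1 := by
      intro p
      rw [Finset.card_erase_of_mem (Finset.mem_univ _), Finset.card_univ, Fintype.card_fun]
      simp
    simp only [he, Finset.prod_const, Finset.card_univ]
  simp only [hpi, Finset.sum_const, Finset.card_univ, smul_eq_mul] at hcard
  have hcf : Fintype.card (Fin k → Bool) = 2 ^ k := by simp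
  rw [hcf] at hcard
  omega


/-- For all sufficiently large k there exists an unsatisfiable linear k-CNF
formula with fewer than ln(2)·k⁴·4^k clauses. -/
theorem stmt15 :
    ∃ K : ℕ, ∀ k : ℕ, K ≤ k →
      ∃ F : Finset (Finset (ℕ × Bool)),
        (∀ C ∈ F, C.card = k ∧ (C.image Prod.fst).card = k) ∧
        (∀ C ∈ F, ∀ D ∈ F, C ≠ D →
          ((C.image Prod.fst) ∩ (D.image Prod.fst)).card ≤ 1) ∧
        (∀ α : ℕ → Bool, ∃ C ∈ F, ∀ p ∈ C, α p.1 ≠ p.2) ∧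
        (F.card : ℝ) < Real.log 2 * (k : ℝ) ^ 4 * 4 ^ k := by
  refine ⟨5, fun k hk => ?_⟩
  have hk1 : 1 ≤ k := by omega
  obtain ⟨q, hqp, hq1, hq2⟩ := Nat.bertrand (k * 2 ^ k + 1) (by positivity)
  haveI : Fact (Nat.Prime q) := ⟨hqp⟩
  haveI : NeZero q := ⟨hqp.pos.ne'⟩
  have h2pos : 1 ≤ 2 ^ k := Nat.one_le_two_pow
  have h2k : 2 ^ k ≤ q := by nlinarith
  have hkq : k < q := by nlinarith
  -- cast from Fin k to ZMod q is injective
  have hcast : ∀ i j : Fin k, ((i:ℕ) : ZMod q) = ((j:ℕ) : ZMod q) → i = j := by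
    intro i j hij
    have hi := ZMod.val_cast_of_lt (lt_trans i.2 hkq)
    have hj := ZMod.val_cast_of_lt (lt_trans j.2 hkq)
    apply Fin.ext
    rw [← hi, ← hj, hij]
  -- variable encoding
  set vr : (ZMod q × ZMod q) → Fin k → ℕ :=
    fun p i => (p.1 * ((i:ℕ):ZMod q) + p.2).val + (i:ℕ) * q with hvr
  have hvr_inj : ∀ (p p' : ZMod q × ZMod q) (i i' : Fin k), vr p i = vr p' i' →
      i = i' ∧ p.1 * ((i:ℕ):ZMod q) + p.2 = p'.1 * ((i':ℕ):ZMod q) + p'.2 := by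
    intro p p' i i' h
    have hv : (p.1 * ((i:ℕ):ZMod q) + p.2).val < q := ZMod.val_lt _
    have hv' : (p'.1 * ((i':ℕ):ZMod q) + p'.2).val < q := ZMod.val_lt _
    simp only [hvr] at h
    have hii : (i:ℕ) = (i':ℕ) := by
      have h1 := congrArg (· / q) h
      simpa [Nat.add_mul_div_right _ _ hqp.pos, Nat.div_eq_of_lt hv,
        Nat.div_eq_of_lt hv'] using h1
    have hval : (p.1 * ((i:ℕ):ZMod q) + p.2).val = (p'.1 * ((i':ℕ):ZMod q) + p'.2).val := by
      have hq' : (i:ℕ) * q = (i':ℕ) * q := by rw [hii]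
      omega
    refine ⟨Fin.ext hii, ?_⟩
    have := congrArg (fun v : ℕ => (v : ZMod q)) hval
    simpa [ZMod.natCast_val, ZMod.cast_id] using this
  -- two distinct lines agree in at most one point
  have hline : ∀ (p p' : ZMod q × ZMod q), p ≠ p' → ∀ i i' : Fin k,
      p.1 * ((i:ℕ):ZMod q) + p.2 = p'.1 * ((i:ℕ):ZMod q) + p'.2 →
      p.1 * ((i':ℕ):ZMod q) + p.2 = p'.1 * ((i':ℕ):ZMod q) + p'.2 → i = i' := by
    intro p p' hne i i' h1 h2
    by_contra hii
    have hzz : ((i:ℕ):ZMod q) ≠ ((i':ℕ):ZMod q) := fun h => hii (hcast _ _ h)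
    have hsub : (p.1 - p'.1) * (((i:ℕ):ZMod q) - ((i':ℕ):ZMod q)) = 0 := by
      linear_combination h1 - h2
    have ha : p.1 = p'.1 := by
      rcases mul_eq_zero.mp hsub with h | h
      · exact sub_eq_zero.mp h
      · exact (hzz (sub_eq_zero.mp h)).elim
    have hb : p.2 = p'.2 := by
      rw [ha] at h1
      exact add_left_cancel h1
    exact hne (Prod.ext ha hb)
  -- choose signs by counting
  have hcards : Fintype.card (ZMod q × ZMod q) = q ^ 2 := by
    rw [Fintype.card_prod, ZMod.card, sq]
  have hcardA : Fintype.card (Fin k → ZMod q → Bool) = 2 ^ (k * q) := by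
    rw [Fintype.card_fun, Fintype.card_fun, ZMod.card, Fintype.card_fin,
      Fintype.card_bool, ← pow_mul, Nat.mul_comm]
  obtain ⟨σ, hσ⟩ := aux_exists_good
    (ι := ZMod q × ZMod q) (A := Fin k → ZMod q → Bool)
    (fun α' p i => ! α' i (p.1 * ((i:ℕ):ZMod q) + p.2))
    (by
      rw [hcards, hcardA]
      have hM : (2 ^ k - 1) + 1 = 2 ^ k := by omega
      have := aux_count k q (2 ^ k - 1) hk1 hM (by rw [hM]; omega)
      rw [hM] at this
      exact this)
  -- build the formula
  set Cl : (ZMod q × ZMod q) → Finset (ℕ × Bool) :=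
    fun p => Finset.image (fun i => (vr p i, σ p i)) Finset.univ with hCl
  have hmemfst : ∀ (r : ZMod q × ZMod q) (x : ℕ),
      x ∈ (Cl r).image Prod.fst → ∃ i : Fin k, vr r i = x := by
    intro r x hx
    rw [hCl, Finset.image_image] at hx
    obtain ⟨i, _, hi⟩ := Finset.mem_image.mp hx
    exact ⟨i, hi⟩
  refine ⟨Finset.image Cl Finset.univ, ?_, ?_, ?_, ?_⟩
  · -- clause sizes
    intro C hC
    obtain ⟨p, -, rfl⟩ := Finset.mem_image.mp hC
    have hinj : Function.Injective (fun i : Fin k => (vr p i, σ p i)) := by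
      intro i j hij
      exact (hvr_inj p p i j (congrArg Prod.fst hij)).1
    constructor
    · rw [hCl, Finset.card_image_of_injective _ hinj, Finset.card_univ, Fintype.card_fin]
    · rw [hCl, Finset.image_image]
      have h1 : (Prod.fst ∘ fun i : Fin k => (vr p i, σ p i)) = fun i => vr p i := rfl
      rw [h1, Finset.card_image_of_injective _ (fun i j hij => (hvr_inj p p i j hij).1),
        Finset.card_univ, Fintype.card_fin]
  · -- linearity
    intro C hC D hD hne
    obtain ⟨p, -, rfl⟩ := Finset.mem_image.mp hC
    obtain ⟨p', -, rfl⟩ := Finset.mem_image.mp hD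
    have hpp : p ≠ p' := fun h => hne (by rw [h])
    rw [Finset.card_le_one]
    intro a ha b hb
    rw [Finset.mem_inter] at ha hb
    obtain ⟨i1, hi1⟩ := hmemfst p a ha.1
    obtain ⟨j1, hj1⟩ := hmemfst p' a ha.2
    obtain ⟨i2, hi2⟩ := hmemfst p b hb.1
    obtain ⟨j2, hj2⟩ := hmemfst p' b hb.2
    obtain ⟨hij1, heq1⟩ := hvr_inj p p' i1 j1 (hi1.trans hj1.symm)
    obtain ⟨hij2, heq2⟩ := hvr_inj p p' i2 j2 (hi2.trans hj2.symm)
    cases hij1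
    cases hij2
    have : i1 = i2 := hline p p' hpp i1 i2 heq1 heq2
    rw [← hi1, ← hi2, this]
  · -- unsatisfiability
    intro α
    obtain ⟨p, hp⟩ := hσ (fun i j => α (j.val + (i:ℕ) * q))
    refine ⟨Cl p, Finset.mem_image_of_mem _ (Finset.mem_univ _), ?_⟩
    intro pr hpr
    rw [hCl] at hpr
    obtain ⟨i, -, rfl⟩ := Finset.mem_image.mp hpr
    have h1 : σ p i = ! α (vr p i) := by
      have := congrFun hp i
      simpa [hvr] using this
    simp [h1]
  · -- size bound
    have hFle : (Finset.image Cl Finset.univ).card ≤ q ^ 2 := by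
      refine le_trans Finset.card_image_le ?_
      rw [Finset.card_univ, hcards]
    have hq3 : q ≤ 3 * (k * 2 ^ k) := by nlinarith
    have hqsq : q ^ 2 ≤ (3 * (k * 2 ^ k)) ^ 2 := Nat.pow_le_pow_left hq3 2
    have hk5 : (5:ℝ) ≤ (k:ℝ) := by exact_mod_cast hk
    have h42 : ((2:ℝ) ^ k) ^ 2 = (4:ℝ) ^ k := by
      rw [show (4:ℝ) = 2 ^ 2 by norm_num, ← pow_mul, ← pow_mul, Nat.mul_comm]
    have hF : ((Finset.image Cl Finset.univ).card : ℝ) ≤ 9 * (k:ℝ) ^ 2 * 4 ^ k := by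
      have h1 : ((Finset.image Cl Finset.univ).card : ℝ) ≤ ((3 * (k * 2 ^ k)) ^ 2 : ℕ) := by
        exact_mod_cast le_trans hFle hqsq
      refine le_trans h1 ?_
      push_cast
      rw [← h42]
      ring_nf
      nlinarith [pow_pos (show (0:ℝ) < 2 by norm_num) k, sq_nonneg ((k:ℝ))]
    have hk2 : (25:ℝ) ≤ (k:ℝ) ^ 2 := by nlinarith
    have hL := Real.log_two_gt_d9
    have h4pos : (0:ℝ) < 4 ^ k := by positivity
    have h9 : 9 * (k:ℝ) ^ 2 < Real.log 2 * (k:ℝ) ^ 4 := by nlinarith [sq_nonneg ((k:ℝ) ^ 2)]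
    calc ((Finset.image Cl Finset.univ).card : ℝ) ≤ 9 * (k:ℝ) ^ 2 * 4 ^ k := hF
      _ < Real.log 2 * (k:ℝ) ^ 4 * 4 ^ k := by nlinarith
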